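/- The fundamental law of TLA+ functions: f = [x ∈ S ↦ e x] if and only if f is a function, the domain of f equals S, and for every x ∈ S, f applied to x equals e x. -/

import Mathlib

/-- A ZF set `f` is a TLA⁺ function: every element is an ordered pair, and the
first components determine the second. -/
def IsAFcn (f : ZFSet) : Prop :=
  (∀ p ∈ f, ∃ a b : ZFSet, p = a.pair b) ∧
    ∀ a b b' : ZFSet, a.pair b ∈ f → a.pair b' ∈ f → b = b'

/-- The domain of `f`: the set of first components of the pairs in `f`. -/
noncomputable def fdom (f : ZFSet) : ZFSet :=
  ZFSet.sep (fun a => ∃ b, a.pair b ∈ f) (ZFSet.sUnion (ZFSet.sUnion f))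

/-- The explicit TLA⁺ function `[x ∈ S ↦ e x]`. -/
noncomputable def lam (S : ZFSet) (e : ZFSet → ZFSet) : ZFSet :=
  @ZFSet.image (fun x => x.pair (e x)) (Classical.allZFSetDefinable _) S

/-- Function application via Hilbert choice. -/
noncomputable def fapp (f a : ZFSet) : ZFSet :=
  Classical.epsilon (fun y => a.pair y ∈ f)

lemma mem_fdom {f a : ZFSet} : a ∈ fdom f ↔ ∃ b, a.pair b ∈ f := by
  simp only [fdom, ZFSet.mem_sep, ZFSet.mem_sUnion, and_iff_right_iff_imp]
  rintro ⟨b, hb⟩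
  exact ⟨{a}, ⟨_, hb, by simp [ZFSet.pair]⟩, by simp⟩

lemma mem_lam {S p : ZFSet} {e : ZFSet → ZFSet} :
    p ∈ lam S e ↔ ∃ x ∈ S, p = x.pair (e x) := by
  simp [lam, ZFSet.mem_image, eq_comm]

lemma fapp_spec {f a b : ZFSet} (hf : IsAFcn f) (h : a.pair b ∈ f) :
    fapp f a = b :=
  hf.2 a _ b (Classical.epsilon_spec (p := fun y => a.pair y ∈ f) ⟨b, h⟩) h

theorem stmt_13 (f S : ZFSet) (e : ZFSet → ZFSet) :
    f = lam S e ↔ IsAFcn f ∧ fdom f = S ∧ ∀ x ∈ S, fapp f x = e x := by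
  constructor
  · rintro rfl
    have hfcn : IsAFcn (lam S e) := by
      constructor
      · intro p hp
        obtain ⟨x, _, rfl⟩ := mem_lam.1 hp
        exact ⟨_, _, rfl⟩
      · intro a b b' hb hb'
        obtain ⟨x, _, hx⟩ := mem_lam.1 hb
        obtain ⟨x', _, hx'⟩ := mem_lam.1 hb'
        obtain ⟨rfl, rfl⟩ := ZFSet.pair_injective hx
        obtain ⟨rfl, rfl⟩ := ZFSet.pair_injective hx'
        rfl
    refine ⟨hfcn, ?_, ?_⟩
    · apply ZFSet.ext
      intro a
      rw [mem_fdom]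
      constructor
      · rintro ⟨b, hb⟩
        obtain ⟨x, hx, hx'⟩ := mem_lam.1 hb
        obtain ⟨rfl, rfl⟩ := ZFSet.pair_injective hx'
        exact hx
      · intro ha
        exact ⟨e a, mem_lam.2 ⟨a, ha, rfl⟩⟩
    · intro x hx
      exact fapp_spec hfcn (mem_lam.2 ⟨x, hx, rfl⟩)
  · rintro ⟨hfcn, hdom, happ⟩
    apply ZFSet.ext
    intro p
    constructor
    · intro hp
      obtain ⟨a, b, rfl⟩ := hfcn.1 p hp
      have ha : a ∈ S := hdom ▸ mem_fdom.2 ⟨b, hp⟩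
      have : b = e a := by rw [← happ a ha, fapp_spec hfcn hp]
      exact mem_lam.2 ⟨a, ha, by rw [this]⟩
    · intro hp
      obtain ⟨x, hx, rfl⟩ := mem_lam.1 hp
      have hx' : x ∈ fdom f := hdom ▸ hx
      obtain ⟨b, hb⟩ := mem_fdom.1 hx'
      have : b = e x := by rw [← happ x hx, fapp_spec hfcn hb]
      rwa [← this]
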